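/- Any finite concept class H of Borel-measurable functions X → {0,1} is agnostically learnable at rate e^{−n}, and this is achieved by empirical risk minimization: for every measurable selection rule A that maps each sample S ∈ (X × {0,1})^n to an element A(S) ∈ H with êr_S(A(S)) = min_{h∈H} êr_S(h), for every probability distribution P on X × {0,1} there exist constants C, c > 0 such that for all n ∈ ℕ, E_{S~P^n}[er_P(A(S))] − min_{h∈H} er_P(h) ≤ C·e^{−c·n}. -/

import Mathlib

open MeasureTheory Filter
open scoped ENNReal

namespace Agn

section Basic

variable {X : Type*} [MeasurableSpace X]

/-- A set is universally measurable: null-measurable w.r.t. every probability measure. -/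
def UnivMeasurableSet {α : Type*} [MeasurableSpace α] (s : Set α) : Prop :=
  ∀ μ : Measure α, IsProbabilityMeasure μ → NullMeasurableSet s μ

/-- A function is universally measurable. -/
def UnivMeasurable {α β : Type*} [MeasurableSpace α] [MeasurableSpace β] (f : α → β) : Prop :=
  ∀ μ : Measure α, IsProbabilityMeasure μ → NullMeasurable f μ

/-- Error rate of a classifier under `P`. -/
noncomputable def er (P : Measure (X × Bool)) (h : X → Bool) : ℝ :=
  (P {p | h p.1 ≠ p.2}).toReal

/-- The best error rate achievable by the class `H`. -/
noncomputable def optErr (P : Measure (X × Bool)) (H : Set (X → Bool)) : ℝ :=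
  sInf ((fun h => er P h) '' H)

/-- The i.i.d. sample measure `P^n`. -/
noncomputable def sampleMeasure (P : Measure (X × Bool)) (n : ℕ) :
    Measure (Fin n → X × Bool) :=
  Measure.pi fun _ => P

end Basic

/-- A (candidate) learning algorithm: a function of the sample and the test point. -/
abbrev Alg (X : Type*) := (n : ℕ) → (Fin n → X × Bool) → X → Bool

section Learn

variable {X : Type*} [MeasurableSpace X]

/-- A learning algorithm: a sequence of universally measurable functions. -/
def IsLearningAlg (f : Alg X) : Prop :=
  ∀ n : ℕ, UnivMeasurable fun p : (Fin n → X × Bool) × X => f n p.1 p.2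

/-- Expected error rate of the classifier returned from an i.i.d. sample of size `n`. -/
noncomputable def expErr (P : Measure (X × Bool)) (f : Alg X) (n : ℕ) : ℝ :=
  ∫ S, er P (f n S) ∂ sampleMeasure P n

/-- Expected excess error rate. -/
noncomputable def excess (P : Measure (X × Bool)) (H : Set (X → Bool)) (f : Alg X)
    (n : ℕ) : ℝ :=
  expErr P f n - optErr P H

/-- `H` is agnostically learnable at rate `R`. -/
def LearnableAtRate (H : Set (X → Bool)) (R : ℕ → ℝ) : Prop :=
  ∃ f : Alg X, IsLearningAlg f ∧
    ∀ P : Measure (X × Bool), IsProbabilityMeasure P →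
      ∃ C > (0 : ℝ), ∃ c > (0 : ℝ), ∀ n : ℕ, excess P H f n ≤ C * R ⌈c * (n : ℝ)⌉₊

/-- `H` is not agnostically learnable faster than `R`. -/
def NotLearnableFasterThan (H : Set (X → Bool)) (R : ℕ → ℝ) : Prop :=
  ∃ C > (0 : ℝ), ∃ c > (0 : ℝ), ∀ f : Alg X, IsLearningAlg f →
    ∃ P : Measure (X × Bool), IsProbabilityMeasure P ∧
      ∃ᶠ n : ℕ in atTop, C * R ⌈c * (n : ℝ)⌉₊ ≤ excess P H f n

/-- `H` is agnostically learnable with optimal rate exactly `e^{-o(n)}`. -/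
def OptimalRateNearExp (H : Set (X → Bool)) : Prop :=
  (∀ ψ : ℕ → ℝ, (∀ n, 0 ≤ ψ n) →
      Tendsto (fun n : ℕ => ψ n / (n : ℝ)) atTop (nhds 0) →
      LearnableAtRate H fun n => Real.exp (-ψ n)) ∧
  ∀ f : Alg X, IsLearningAlg f →
    ∃ ψ : ℕ → ℝ, (∀ n, 0 ≤ ψ n) ∧
      Tendsto (fun n : ℕ => ψ n / (n : ℝ)) atTop (nhds 0) ∧
      ∃ P : Measure (X × Bool), IsProbabilityMeasure P ∧
        ∃ᶠ n in atTop, Real.exp (-ψ n) ≤ excess P H f n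

/-- `H` is agnostically learnable with optimal rate exactly `o(n^{-1/2})`. -/
def OptimalRateSuperRoot (H : Set (X → Bool)) : Prop :=
  (∃ f : Alg X, IsLearningAlg f ∧
      ∀ P : Measure (X × Bool), IsProbabilityMeasure P →
        Tendsto (fun n : ℕ => Real.sqrt (n : ℝ) * excess P H f n) atTop (nhds 0)) ∧
  ∀ R : ℕ → ℝ, (∀ n, 0 < R n) →
    Tendsto (fun n : ℕ => Real.sqrt (n : ℝ) * R n) atTop (nhds 0) →
    ¬ LearnableAtRate H R

/-- `H` requires arbitrarily slow rates for agnostic learning. -/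
def RequiresArbitrarilySlowRates (H : Set (X → Bool)) : Prop :=
  (∃ f : Alg X, IsLearningAlg f ∧
      ∀ P : Measure (X × Bool), IsProbabilityMeasure P →
        Filter.limsup (fun n : ℕ => excess P H f n) atTop ≤ 0) ∧
  ∀ R : ℕ → ℝ, (∀ n, 0 < R n) → Tendsto R atTop (nhds 0) →
    NotLearnableFasterThan H R

end Learn

/-- A witness of the image admissible Suslin property. -/
structure SuslinWitness (X : Type*) [MeasurableSpace X] (H : Set (X → Bool)) where
  Θ : Type
  topΘ : TopologicalSpace Θ
  measΘ : MeasurableSpace Θ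
  polish : @PolishSpace Θ topΘ
  borel : @BorelSpace Θ topΘ measΘ
  F : Θ × X → Bool
  measF : @Measurable (Θ × X) Bool (@Prod.instMeasurableSpace Θ X measΘ _) _ F
  range_eq : H = {g | ∃ θ : Θ, g = fun x => F (θ, x)}

/-- The image admissible Suslin property. -/
def ImageAdmissibleSuslin (X : Type*) [MeasurableSpace X] (H : Set (X → Bool)) : Prop :=
  Nonempty (SuslinWitness X H)

section Trees

variable {X : Type*}

/-- `H` shatters an infinite Littlestone tree. -/
def ShattersInfLittlestoneTree (H : Set (X → Bool)) : Prop :=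
  ∃ t : List Bool → X, ∀ y : ℕ → Bool, ∀ n : ℕ, ∃ h ∈ H,
    ∀ k ≤ n, h (t (List.ofFn fun i : Fin k => y i)) = y k

/-- `H` shatters an infinite VCL tree. -/
def ShattersInfVCLTree (H : Set (X → Bool)) : Prop :=
  ∃ t : (k : ℕ) → ((j : Fin k) → Fin (j.1 + 1) → Bool) → Fin (k + 1) → X,
    ∀ y : (k : ℕ) → Fin (k + 1) → Bool, ∀ n : ℕ, ∃ h ∈ H,
      ∀ k ≤ n, ∀ i : Fin (k + 1), h (t k (fun j => y j.1) i) = y k i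

/-- `H` (VC-)shatters some set of `n` points. -/
def Shatters (H : Set (X → Bool)) (n : ℕ) : Prop :=
  ∃ x : Fin n → X, ∀ y : Fin n → Bool, ∃ h ∈ H, ∀ i, h (x i) = y i

end Trees

/-- `log x := ln (max x e)`, the truncated logarithm used throughout. -/
noncomputable def clog (x : ℝ) : ℝ := Real.log (max x (Real.exp 1))

/-- `ε²(n,δ) = (1/n)(d log(n/d) + log(1/δ))`. -/
noncomputable def epsSq (d n : ℕ) (δ : ℝ) : ℝ :=
  (1 / (n : ℝ)) * ((d : ℝ) * clog ((n : ℝ) / (d : ℝ)) + clog (1 / δ))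

section Emp

variable {X : Type*}

/-- Empirical risk on a sample. -/
noncomputable def empErr {n : ℕ} (S : Fin n → X × Bool) (h : X → Bool) : ℝ :=
  (1 / (n : ℝ)) * ∑ i, if h (S i).1 = (S i).2 then 0 else 1

/-- Empirical distance between two classifiers on a sample. -/
noncomputable def empDist {n : ℕ} (S : Fin n → X × Bool) (f g : X → Bool) : ℝ :=
  (1 / (n : ℝ)) * ∑ i, if f (S i).1 = g (S i).1 then 0 else 1

end Emp

section Mix

variable {X : Type*} [MeasurableSpace X]

/-- The uniform mixture `P̄ = (1/n) ∑ Pᵢ`. -/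
noncomputable def mixMeasure {n : ℕ} (P : Fin n → Measure (X × Bool)) : Measure (X × Bool) :=
  (n : ℝ≥0∞)⁻¹ • ∑ i, P i

/-- Population distance `Q({(x,y) : f x ≠ g x})`. -/
noncomputable def popDist (Q : Measure (X × Bool)) (f g : X → Bool) : ℝ :=
  (Q {p | f p.1 ≠ g p.1}).toReal

end Mix

section Partial

variable {X : Type*} [MeasurableSpace X]

/-- Realizable binary classifications of a finite sample by a partial concept class. -/
def pproj (G : Set (X → Option Bool)) {n : ℕ} (x : Fin n → X) : Set (Fin n → Bool) :=
  {b | ∃ g ∈ G, ∀ i, g (x i) = some (b i)}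

/-- The partial class `G` shatters some `n` points. -/
def PShatters (G : Set (X → Option Bool)) (n : ℕ) : Prop :=
  ∃ x : Fin n → X, pproj G x = Set.univ

/-- Universal measurability of a partial concept class. -/
def PUnivMeasurable (G : Set (X → Option Bool)) : Prop :=
  ∀ (n : ℕ) (b : Fin n → Bool), UnivMeasurableSet {x : Fin n → X | b ∈ pproj G x}

/-- The conditional probability `P(Y = y | X = x)` determined by `η`. -/
noncomputable def condProb (η : X → ℝ) (x : X) (y : Bool) : ℝ :=
  if y then η x else 1 - η x

/-- The Bayes classifier determined by `η`. -/
noncomputable def bayes (η : X → ℝ) : X → Bool := fun x => decide ((1 / 2 : ℝ) ≤ η x)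

/-- The marginal distribution of `P` on `X`. -/
noncomputable def marginalX (P : Measure (X × Bool)) : Measure X := P.map Prod.fst

/-- `η` is a (Borel) version of `P(Y = 1 | X = ·)` with values in `[0,1]`. -/
def IsCondDist (P : Measure (X × Bool)) (η : X → ℝ) : Prop :=
  Measurable η ∧ (∀ x, 0 ≤ η x ∧ η x ≤ 1) ∧
    ∀ s : Set X, MeasurableSet s →
      P (s ×ˢ ({true} : Set Bool)) = ∫⁻ x in s, ENNReal.ofReal (η x) ∂ marginalX P

/-- `P` is Bayes-realizable with respect to the partial concept class `G`. -/
def BayesRealizable (G : Set (X → Option Bool)) (P : Measure (X × Bool)) (η : X → ℝ) : Prop :=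
  ∀ n : ℕ, ∀ᵐ x ∂ (Measure.pi fun _ : Fin n => marginalX P),
    ∃ b ∈ pproj G x, ∀ i, (1 / 2 : ℝ) ≤ condProb η (x i) (b i)

end Partial

/-- The Bernoulli measure on `Bool` with success probability `p`. -/
noncomputable def bern (p : ℝ) : Measure Bool :=
  ENNReal.ofReal p • Measure.dirac true + ENNReal.ofReal (1 - p) • Measure.dirac false

section Labels

variable {X : Type*} [MeasurableSpace X]

/-- The conditional law of the labels given the instances. -/
noncomputable def labelLaw (η : X → ℝ) {n : ℕ} (x : Fin n → X) : Measure (Fin n → Bool) :=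
  Measure.pi fun i => bern (η (x i))

end Labels

section FinLab

variable {X : Type*}

/-- Empirical risk of a labeling `f` against realized labels `y`. -/
noncomputable def empErrLab {n : ℕ} (y f : Fin n → Bool) : ℝ :=
  (1 / (n : ℝ)) * ∑ i, if f i = y i then 0 else 1

/-- Hamming distance (normalized) between two labelings. -/
noncomputable def distLab {n : ℕ} (f g : Fin n → Bool) : ℝ :=
  (1 / (n : ℝ)) * ∑ i, if f i = g i then 0 else 1

/-- Semi-empirical error of a labeling on the length-`t` prefix. -/
noncomputable def semiErrFin (η : X → ℝ) {n : ℕ} (x : Fin n → X) (t : ℕ)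
    (f : Fin n → Bool) : ℝ :=
  (1 / (t : ℝ)) * ∑ i : Fin n, if i.1 < t then 1 - condProb η (x i) (f i) else 0

/-- Semi-empirical Bayes error on the length-`t` prefix. -/
noncomputable def semiErrBayesFin (η : X → ℝ) {n : ℕ} (x : Fin n → X) (t : ℕ) : ℝ :=
  (1 / (t : ℝ)) * ∑ i : Fin n, if i.1 < t then min (η (x i)) (1 - η (x i)) else 0

/-- Normalized disagreement between labelings on the length-`t` prefix. -/
noncomputable def distFin {n : ℕ} (t : ℕ) (f g : Fin n → Bool) : ℝ :=
  (1 / (t : ℝ)) * ∑ i : Fin n, if i.1 < t ∧ f i ≠ g i then 1 else 0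

end FinLab

section Seq

variable {X : Type*}

/-- The labeling `g` of the first `n` points is realizable by `G`. -/
def memProj (G : Set (X → Option Bool)) (x : ℕ → X) (n : ℕ) (g : ℕ → Bool) : Prop :=
  ∃ g' ∈ G, ∀ i < n, g' (x i) = some (g i)

/-- Semi-empirical error of a labeling on the first `t` points. -/
noncomputable def semiErrSeq (η : X → ℝ) (x : ℕ → X) (t : ℕ) (g : ℕ → Bool) : ℝ :=
  (1 / (t : ℝ)) * ∑ i ∈ Finset.range t, (1 - condProb η (x i) (g i))

/-- Semi-empirical Bayes error on the first `t` points. -/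
noncomputable def semiErrBayesSeq (η : X → ℝ) (x : ℕ → X) (t : ℕ) : ℝ :=
  (1 / (t : ℝ)) * ∑ i ∈ Finset.range t, min (η (x i)) (1 - η (x i))

/-- Normalized disagreement between two labelings on the first `t` points. -/
noncomputable def distSeq (t : ℕ) (f g : ℕ → Bool) : ℝ :=
  (1 / (t : ℝ)) * ∑ i ∈ Finset.range t, if f i = g i then 0 else 1

/-- Projection of the `ε`-near-optimal realizable labelings of the first `t` points
to the first `m` coordinates. -/
def projGood (G : Set (X → Option Bool)) (η : X → ℝ) (x : ℕ → X) (ε : ℝ) (t m : ℕ) :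
    Set (Fin m → Bool) :=
  {b | ∃ g : ℕ → Bool, memProj G x t g ∧
    semiErrSeq η x t g - semiErrBayesSeq η x t ≤ ε ∧ ∀ j : Fin m, b j = g (j : ℕ)}

end Seq

/-- `Z` is an i.i.d. sequence with common law `P` on the probability space `(Ω, μ)`. -/
def IsIIDSeq {Ω : Type*} [MeasurableSpace Ω] (μ : Measure Ω) {Y : Type*} [MeasurableSpace Y]
    (P : Measure Y) (Z : ℕ → Ω → Y) : Prop :=
  (∀ i, Measurable (Z i)) ∧
    ∀ n : ℕ, μ.map (fun ω => fun i : Fin n => Z (i : ℕ) ω) = Measure.pi fun _ : Fin n => P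

section UGCsec

variable {X : Type*} [MeasurableSpace X]

/-- The uniform deviation of empirical frequencies over the class `H`. -/
noncomputable def ugcDev (H : Set (X → Bool)) (Q : Measure X) {n : ℕ} (x : Fin n → X) : ℝ :=
  sSup ((fun h => |(1 / (n : ℝ)) * (∑ i, if h (x i) = true then (1 : ℝ) else 0) -
      (Q {z | h z = true}).toReal|) '' H)

/-- The universal Glivenko–Cantelli property. -/
def UGC (H : Set (X → Bool)) : Prop :=
  ∀ Q : Measure X, IsProbabilityMeasure Q →
    Tendsto (fun n : ℕ => ∫ x, ugcDev H Q x ∂ (Measure.pi fun _ : Fin n => Q)) atTop (nhds 0)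

/-- `H` is totally bounded in `L₁(Q)`. -/
def TotallyBoundedL1 (H : Set (X → Bool)) (Q : Measure X) : Prop :=
  ∀ ε : ℝ, 0 < ε → ∃ H' : Set (X → Bool), H' ⊆ H ∧ H'.Finite ∧
    ∀ h ∈ H, ∃ h' ∈ H', (Q {x | h' x ≠ h x}).toReal ≤ ε

end UGCsec

section ERMAux

variable {X : Type*} [MeasurableSpace X]

lemma measurableSet_errSet {h : X → Bool} (hh : Measurable h) :
    MeasurableSet {p : X × Bool | h p.1 ≠ p.2} := by
  have heq : {p : X × Bool | h p.1 ≠ p.2}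
      = (fun p : X × Bool => (h p.1, p.2)) ⁻¹' {q : Bool × Bool | q.1 ≠ q.2} := rfl
  rw [heq]
  exact ((hh.comp measurable_fst).prodMk measurable_snd) ((Set.to_countable _).measurableSet)

/-- Error indicator. -/
noncomputable def errInd (h : X → Bool) : X × Bool → ℝ :=
  Set.indicator {p : X × Bool | h p.1 ≠ p.2} 1

lemma errInd_eq (h : X → Bool) (p : X × Bool) :
    errInd h p = if h p.1 = p.2 then 0 else 1 := by
  by_cases hp : h p.1 = p.2 <;> simp [errInd, hp]

lemma errInd_nonneg (h : X → Bool) (p : X × Bool) : 0 ≤ errInd h p := by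
  rw [errInd_eq]; split <;> norm_num

lemma errInd_le_one (h : X → Bool) (p : X × Bool) : errInd h p ≤ 1 := by
  rw [errInd_eq]; split <;> norm_num

lemma measurable_errInd {h : X → Bool} (hh : Measurable h) : Measurable (errInd h) :=
  measurable_const.indicator (measurableSet_errSet hh)

lemma integrable_errInd (P : Measure (X × Bool)) [IsFiniteMeasure P] {h : X → Bool}
    (hh : Measurable h) : Integrable (errInd h) P :=
  (integrable_const 1).indicator (measurableSet_errSet hh)

lemma integral_errInd (P : Measure (X × Bool)) {h : X → Bool} (hh : Measurable h) :
    ∫ p, errInd h p ∂P = er P h := by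
  rw [errInd, MeasureTheory.integral_indicator_one (measurableSet_errSet hh), er]; rfl

lemma empErr_eq_sum_errInd {n : ℕ} (S : Fin n → X × Bool) (h : X → Bool) :
    empErr S h = (1 / (n : ℝ)) * ∑ i, errInd h (S i) := by
  rw [empErr]
  congr 1
  exact Finset.sum_congr rfl fun i _ => (errInd_eq h (S i)).symm

lemma measurable_empErr {n : ℕ} {h : X → Bool} (hh : Measurable h) :
    Measurable fun S : Fin n → X × Bool => empErr S h := by
  have heq : (fun S : Fin n → X × Bool => empErr S h)
      = fun S => (1 / (n : ℝ)) * ∑ i, errInd h (S i) := funext fun S => empErr_eq_sum_errInd S h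
  rw [heq]
  exact (Finset.measurable_sum _ fun i _ =>
    (measurable_errInd hh).comp (measurable_pi_apply i)).const_mul _

lemma integrable_of_abs_bound {α : Type*} [MeasurableSpace α] (μ : Measure α) [IsFiniteMeasure μ]
    {f : α → ℝ} (hf : Measurable f) (C : ℝ) (h : ∀ a, |f a| ≤ C) : Integrable f μ :=
  Integrable.mono' (integrable_const C) hf.aestronglyMeasurable
    (Filter.Eventually.of_forall fun a => by simpa [Real.norm_eq_abs] using h a)

lemma exp_quad_bound {x : ℝ} (hx : |x| ≤ 1) : Real.exp x ≤ 1 + x + x ^ 2 := by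
  have h := Real.exp_bound hx (n := 2) (by norm_num)
  have hsum : ∑ i ∈ Finset.range 2, x ^ i / (Nat.factorial i : ℝ) = 1 + x := by
    simp [Finset.sum_range_succ, Nat.factorial]
  rw [hsum] at h
  have h2 : Real.exp x - (1 + x) ≤ |x| ^ 2 * ((2 + 1 : ℕ) / ((Nat.factorial 2 : ℕ) * 2)) :=
    le_trans (le_abs_self _) h
  have h3 : |x| ^ 2 = x ^ 2 := sq_abs x
  have h4 : ((2 + 1 : ℕ) : ℝ) / (((Nat.factorial 2 : ℕ) : ℝ) * 2) = 3 / 4 := by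
    norm_num [Nat.factorial]
  nlinarith [sq_nonneg x]

/-- Chernoff-style bound for the product measure. -/
lemma chernoff_core {α : Type*} [MeasurableSpace α] (Q : Measure α) [IsProbabilityMeasure Q]
    {w : α → ℝ} (hw : Measurable w) (hb : ∀ p, |w p| ≤ 1) {Δ : ℝ}
    (hΔ0 : 0 < Δ) (hΔ1 : Δ ≤ 1) (hmean : ∫ p, w p ∂Q ≤ -Δ) (n : ℕ) :
    ((Measure.pi fun _ : Fin n => Q) {S | 0 ≤ ∑ i, w (S i)}).toReal
      ≤ Real.exp (-(Δ ^ 2 / 4) * n) := by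
  set lam : ℝ := Δ / 2 with hlam
  have hlam0 : 0 < lam := by positivity
  have hlam1 : lam ≤ 1 / 2 := by rw [hlam]; linarith
  set g : α → ℝ := fun p => Real.exp (lam * w p) with hg
  have hgmeas : Measurable g := (hw.const_mul lam).exp
  have hgpos : ∀ p, 0 < g p := fun p => Real.exp_pos _
  have habs : ∀ p, |lam * w p| ≤ 1 := by
    intro p
    rw [abs_mul, abs_of_pos hlam0]
    nlinarith [hb p, abs_nonneg (w p)]
  have hgle : ∀ p, g p ≤ 1 + lam * w p + lam ^ 2 := by
    intro p
    refine le_trans (exp_quad_bound (habs p)) ?_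
    have h1 : (lam * w p) ^ 2 ≤ lam ^ 2 := by
      have hw2 : (w p) ^ 2 ≤ 1 := by
        have h := abs_le.mp (hb p); nlinarith
      calc (lam * w p) ^ 2 = lam ^ 2 * (w p) ^ 2 := by ring
        _ ≤ lam ^ 2 * 1 := by nlinarith [sq_nonneg lam]
        _ = lam ^ 2 := by ring
    linarith
  have hwint : Integrable w Q := integrable_of_abs_bound Q hw 1 hb
  have hgint : Integrable g Q := by
    refine integrable_of_abs_bound Q hgmeas (Real.exp 1) fun p => ?_
    rw [abs_of_pos (hgpos p)]
    refine Real.exp_le_exp.mpr ?_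
    nlinarith [abs_le.mp (hb p), hlam0, hlam1]
  have hInt_le : ∫ p, g p ∂Q ≤ Real.exp (-(Δ ^ 2 / 4)) := by
    have h1 : ∫ p, g p ∂Q ≤ ∫ p, (1 + lam * w p + lam ^ 2) ∂Q := by
      refine integral_mono hgint ?_ hgle
      exact ((integrable_const 1).add (hwint.const_mul lam)).add (integrable_const _)
    have h2 : ∫ p, (1 + lam * w p + lam ^ 2) ∂Q
        = 1 + lam * ∫ p, w p ∂Q + lam ^ 2 := by
      have hint1 : Integrable (fun p => 1 + lam * w p) Q := by
        exact (integrable_const 1).add (hwint.const_mul lam)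
      have e1 : ∫ p, (1 + lam * w p + lam ^ 2) ∂Q
          = (∫ p, (1 + lam * w p) ∂Q) + ∫ _p, (lam ^ 2 : ℝ) ∂Q := by
        exact integral_add hint1 (integrable_const _)
      have e2 : ∫ p, (1 + lam * w p) ∂Q
          = (∫ _p, (1 : ℝ) ∂Q) + ∫ p, lam * w p ∂Q := by
        exact integral_add (integrable_const 1) (hwint.const_mul lam)
      rw [e1, e2, integral_const_mul]
      simp [measure_univ]
    have h3 : 1 + lam * ∫ p, w p ∂Q + lam ^ 2 ≤ 1 - Δ ^ 2 / 4 := by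
      have h4 : lam * ∫ p, w p ∂Q ≤ lam * (-Δ) :=
        mul_le_mul_of_nonneg_left hmean hlam0.le
      nlinarith
    have h5 : (1 : ℝ) - Δ ^ 2 / 4 ≤ Real.exp (-(Δ ^ 2 / 4)) := by
      have := Real.add_one_le_exp (-(Δ ^ 2 / 4))
      linarith
    linarith
  have hgi0 : 0 ≤ ∫ p, g p ∂Q := integral_nonneg fun p => (hgpos p).le
  letI : MeasureSpace α := ⟨Q⟩
  have hvol : (Measure.pi fun _ : Fin n => Q) = (volume : Measure (Fin n → α)) :=
    (MeasureTheory.volume_pi).symm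
  have hEmeas : MeasurableSet {S : Fin n → α | 0 ≤ ∑ i, w (S i)} :=
    measurableSet_le measurable_const
      (Finset.measurable_sum _ fun i _ => hw.comp (measurable_pi_apply i))
  have hprod_int : Integrable (fun S : Fin n → α => ∏ i, g (S i))
      (Measure.pi fun _ : Fin n => Q) := by
    rw [hvol]
    exact MeasureTheory.Integrable.fintype_prod (f := fun _ : Fin n => g) fun _ => hgint
  have hind : ∀ S : Fin n → α,
      Set.indicator {S : Fin n → α | 0 ≤ ∑ i, w (S i)} 1 S ≤ ∏ i, g (S i) := by
    intro S
    by_cases hS : S ∈ {S : Fin n → α | 0 ≤ ∑ i, w (S i)}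
    · rw [Set.indicator_of_mem hS]
      have h1 : (1 : ℝ) = Real.exp 0 := (Real.exp_zero).symm
      have h2 : Real.exp 0 ≤ Real.exp (∑ i, lam * w (S i)) := by
        refine Real.exp_le_exp.mpr ?_
        rw [← Finset.mul_sum]
        exact mul_nonneg hlam0.le hS
      have h3 : Real.exp (∑ i, lam * w (S i)) = ∏ i, g (S i) := Real.exp_sum _ _
      simp only [Pi.one_apply]
      rw [h1, ← h3]; exact h2
    · rw [Set.indicator_of_notMem hS]
      exact Finset.prod_nonneg fun i _ => (hgpos (S i)).le
  calc ((Measure.pi fun _ : Fin n => Q) {S | 0 ≤ ∑ i, w (S i)}).toReal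
      = ∫ S, Set.indicator {S : Fin n → α | 0 ≤ ∑ i, w (S i)} 1 S
          ∂(Measure.pi fun _ : Fin n => Q) :=
        (MeasureTheory.integral_indicator_one hEmeas).symm
    _ ≤ ∫ S, ∏ i, g (S i) ∂(Measure.pi fun _ : Fin n => Q) :=
        integral_mono ((integrable_const 1).indicator hEmeas) hprod_int hind
    _ = (∫ p, g p ∂Q) ^ n := by
        rw [hvol]
        simpa [hvol] using MeasureTheory.integral_fintype_prod_eq_pow (ι := Fin n) (μ := Q) g
    _ ≤ Real.exp (-(Δ ^ 2 / 4)) ^ n := pow_le_pow_left₀ hgi0 hInt_le n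
    _ = Real.exp (-(Δ ^ 2 / 4) * n) := by
        rw [← Real.exp_nat_mul, mul_comm]

end ERMAux

section ERMMain

variable {X : Type*} [MeasurableSpace X]

lemma er_nonneg (P : Measure (X × Bool)) (h : X → Bool) : 0 ≤ er P h :=
  ENNReal.toReal_nonneg

lemma er_le_one (P : Measure (X × Bool)) [IsProbabilityMeasure P] (h : X → Bool) :
    er P h ≤ 1 := by
  rw [er]
  have h1 : P {p | h p.1 ≠ p.2} ≤ 1 := by
    rw [← (measure_univ (μ := P))]
    exact measure_mono (Set.subset_univ _)
  calc (P {p | h p.1 ≠ p.2}).toReal ≤ (1 : ℝ≥0∞).toReal :=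
        ENNReal.toReal_mono (by norm_num) h1
    _ = 1 := by norm_num

/-- The key bound for ERM over a finite class. -/
lemma erm_excess_bound (H : Set (X → Bool)) (hne : H.Nonempty) (hfin : H.Finite)
    (hmeas : ∀ h ∈ H, Measurable h) (A : Alg X)
    (hmem : ∀ (n : ℕ) (S : Fin n → X × Bool), A n S ∈ H)
    (herm : ∀ (n : ℕ) (S : Fin n → X × Bool), ∀ h ∈ H, empErr S (A n S) ≤ empErr S h)
    (P : Measure (X × Bool)) (hP : IsProbabilityMeasure P) :
    ∃ C > (0 : ℝ), ∃ c > (0 : ℝ), ∀ n : ℕ,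
      expErr P A n - optErr P H ≤ C * Real.exp (-(c * (n : ℝ))) := by
  have hopt_mem : optErr P H ∈ (fun h => er P h) '' H :=
    (hne.image _).csInf_mem (hfin.image _)
  obtain ⟨hstar, hstarH, hstar_eq0⟩ := hopt_mem
  have hstar_eq : er P hstar = optErr P H := hstar_eq0
  have hopt_le : ∀ h ∈ H, optErr P H ≤ er P h := fun h hh =>
    csInf_le ((hfin.image _).bddBelow) ⟨h, hh, rfl⟩
  have hopt0 : 0 ≤ optErr P H := hstar_eq ▸ er_nonneg P hstar
  haveI : ∀ n : ℕ, IsProbabilityMeasure (sampleMeasure P n) := fun n => by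
    rw [sampleMeasure]; infer_instance
  set B := {h ∈ H | optErr P H < er P h} with hBdef
  have hBH : B ⊆ H := fun h hh => hh.1
  have hfinB : B.Finite := hfin.subset hBH
  by_cases hB : B.Nonempty
  · -- main case
    have hD : sInf ((fun h => er P h - optErr P H) '' B) ∈
        (fun h => er P h - optErr P H) '' B :=
      (hB.image _).csInf_mem (hfinB.image _)
    set Δ := sInf ((fun h => er P h - optErr P H) '' B) with hΔdef
    obtain ⟨h1, h1B, h1eq⟩ := hD
    have h1eq' : er P h1 - optErr P H = Δ := h1eq
    have hΔ0 : 0 < Δ := by rw [← h1eq']; have := h1B.2; linarith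
    have hΔ1 : Δ ≤ 1 := by
      rw [← h1eq']
      have := er_le_one P h1
      linarith
    have hΔle : ∀ h ∈ B, Δ ≤ er P h - optErr P H := fun h hh =>
      csInf_le ((hfinB.image _).bddBelow) ⟨h, hh, rfl⟩
    refine ⟨(hfinB.toFinset.card : ℝ) + 1, by positivity, Δ ^ 2 / 4, by positivity, fun n => ?_⟩
    have hexp_pos : (0 : ℝ) < Real.exp (-(Δ ^ 2 / 4 * (n : ℝ))) := Real.exp_pos _
    by_cases hint : Integrable (fun S => er P (A n S)) (sampleMeasure P n)
    · -- integrable case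
      set E : (X → Bool) → Set (Fin n → X × Bool) :=
        fun h => {S | empErr S h ≤ empErr S hstar} with hEdef
      have hmeasE : ∀ h ∈ B, MeasurableSet (E h) := fun h hh =>
        measurableSet_le (measurable_empErr (hmeas h (hBH hh))) (measurable_empErr (hmeas hstar hstarH))
      set g : (Fin n → X × Bool) → ℝ :=
        fun S => optErr P H + ∑ h ∈ hfinB.toFinset, Set.indicator (E h) (1 : (Fin n → X × Bool) → ℝ) S with hgdef
      have hfg : ∀ S, er P (A n S) ≤ g S := by
        intro S
        have hsum_nonneg : ∀ h ∈ hfinB.toFinset, (0:ℝ) ≤ Set.indicator (E h) (1 : (Fin n → X × Bool) → ℝ) S :=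
          fun h _ => Set.indicator_nonneg (fun _ _ => zero_le_one) S
        by_cases h0B : A n S ∈ B
        · have hSE : S ∈ E (A n S) := herm n S hstar hstarH
          have hterm : Set.indicator (E (A n S)) (1 : (Fin n → X × Bool) → ℝ) S = 1 := by
            rw [Set.indicator_of_mem hSE]; rfl
          have hone_le : (1:ℝ) ≤ ∑ h ∈ hfinB.toFinset, Set.indicator (E h) (1 : (Fin n → X × Bool) → ℝ) S := by
            calc (1:ℝ) = Set.indicator (E (A n S)) (1 : (Fin n → X × Bool) → ℝ) S := hterm.symm
              _ ≤ ∑ h ∈ hfinB.toFinset, Set.indicator (E h) (1 : (Fin n → X × Bool) → ℝ) S :=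
                Finset.single_le_sum hsum_nonneg (hfinB.mem_toFinset.mpr h0B)
          have := er_le_one P (A n S)
          have : er P (A n S) ≤ 1 := this
          rw [hgdef]
          dsimp only
          linarith
        · have hle : er P (A n S) ≤ optErr P H := by
            by_contra hcon
            exact h0B ⟨hmem n S, lt_of_not_ge hcon⟩
          have : (0:ℝ) ≤ ∑ h ∈ hfinB.toFinset, Set.indicator (E h) (1 : (Fin n → X × Bool) → ℝ) S :=
            Finset.sum_nonneg hsum_nonneg
          rw [hgdef]; dsimp only; linarith
      have hintSum : Integrable (fun S => ∑ h ∈ hfinB.toFinset, Set.indicator (E h) (1 : (Fin n → X × Bool) → ℝ) S)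
          (sampleMeasure P n) :=
        integrable_finset_sum _ fun h hh =>
          (integrable_const 1).indicator (hmeasE h (hfinB.mem_toFinset.mp hh))
      have hgint : Integrable g (sampleMeasure P n) := by
        exact (integrable_const _).add hintSum
      have hstep1 : expErr P A n ≤ ∫ S, g S ∂(sampleMeasure P n) :=
        integral_mono hint hgint hfg
      have hstep2 : ∫ S, g S ∂(sampleMeasure P n)
          = optErr P H + ∑ h ∈ hfinB.toFinset, ((sampleMeasure P n) (E h)).toReal := by
        have e1 : ∫ S, g S ∂(sampleMeasure P n)
            = (∫ _S, optErr P H ∂(sampleMeasure P n))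
              + ∫ S, (∑ h ∈ hfinB.toFinset, Set.indicator (E h) (1 : (Fin n → X × Bool) → ℝ) S) ∂(sampleMeasure P n) := by
          exact integral_add (integrable_const _) hintSum
        have e2 : ∫ S, (∑ h ∈ hfinB.toFinset, Set.indicator (E h)
              (1 : (Fin n → X × Bool) → ℝ) S) ∂(sampleMeasure P n)
            = ∑ h ∈ hfinB.toFinset, ∫ S, Set.indicator (E h)
              (1 : (Fin n → X × Bool) → ℝ) S ∂(sampleMeasure P n) := by
          exact integral_finset_sum _ fun h hh =>
            (integrable_const 1).indicator (hmeasE h (hfinB.mem_toFinset.mp hh))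
        rw [e1, e2]
        congr 1
        · simp [measure_univ]
        · refine Finset.sum_congr rfl fun h hh => ?_
          exact MeasureTheory.integral_indicator_one (hmeasE h (hfinB.mem_toFinset.mp hh))
      have hEbound : ∀ h ∈ B, ((sampleMeasure P n) (E h)).toReal
          ≤ Real.exp (-(Δ ^ 2 / 4) * (n : ℝ)) := by
        intro h hh
        set w : X × Bool → ℝ := fun p => errInd hstar p - errInd h p with hwdef
        have hwmeas : Measurable w :=
          (measurable_errInd (hmeas hstar hstarH)).sub (measurable_errInd (hmeas h (hBH hh)))
        have hwb : ∀ p, |w p| ≤ 1 := by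
          intro p
          rw [hwdef]
          have := errInd_nonneg hstar p
          have := errInd_le_one hstar p
          have := errInd_nonneg h p
          have := errInd_le_one h p
          rw [abs_le]; constructor <;> dsimp only <;> linarith
        have hwmean : ∫ p, w p ∂P ≤ -Δ := by
          have hint2 : ∫ p, w p ∂P = er P hstar - er P h := by
            rw [hwdef]
            rw [integral_sub (integrable_errInd P (hmeas hstar hstarH))
              (integrable_errInd P (hmeas h (hBH hh)))]
            rw [integral_errInd P (hmeas hstar hstarH), integral_errInd P (hmeas h (hBH hh))]
          rw [hint2, hstar_eq]
          have := hΔle h hh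
          linarith
        have hsub : E h ⊆ {S : Fin n → X × Bool | 0 ≤ ∑ i, w (S i)} := by
          intro S hS
          have hS' : empErr S h ≤ empErr S hstar := hS
          rw [empErr_eq_sum_errInd, empErr_eq_sum_errInd] at hS'
          have hsum : ∑ i, errInd h (S i) ≤ ∑ i, errInd hstar (S i) := by
            rcases Nat.eq_zero_or_pos n with hn | hn
            · subst hn; simp
            · have hpos : (0:ℝ) < 1 / (n : ℝ) := by positivity
              exact le_of_mul_le_mul_left (by linarith [hS']) hpos
          have : (0:ℝ) ≤ ∑ i, (errInd hstar (S i) - errInd h (S i)) := by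
            rw [Finset.sum_sub_distrib]
            linarith
          simpa [hwdef] using this
        have hmono : (sampleMeasure P n) (E h)
            ≤ (sampleMeasure P n) {S : Fin n → X × Bool | 0 ≤ ∑ i, w (S i)} :=
          measure_mono hsub
        have := chernoff_core P hwmeas hwb hΔ0 hΔ1 hwmean n
        calc ((sampleMeasure P n) (E h)).toReal
            ≤ ((Measure.pi fun _ : Fin n => P) {S : Fin n → X × Bool | 0 ≤ ∑ i, w (S i)}).toReal :=
              ENNReal.toReal_mono (measure_ne_top _ _) hmono
          _ ≤ Real.exp (-(Δ ^ 2 / 4) * (n : ℝ)) := this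
      have hsumbound : ∑ h ∈ hfinB.toFinset, ((sampleMeasure P n) (E h)).toReal
          ≤ (hfinB.toFinset.card : ℝ) * Real.exp (-(Δ ^ 2 / 4) * (n : ℝ)) := by
        calc ∑ h ∈ hfinB.toFinset, ((sampleMeasure P n) (E h)).toReal
            ≤ ∑ _h ∈ hfinB.toFinset, Real.exp (-(Δ ^ 2 / 4) * (n : ℝ)) :=
              Finset.sum_le_sum fun h hh => hEbound h (hfinB.mem_toFinset.mp hh)
          _ = (hfinB.toFinset.card : ℝ) * Real.exp (-(Δ ^ 2 / 4) * (n : ℝ)) := by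
              rw [Finset.sum_const, nsmul_eq_mul]
      have heq : -(Δ ^ 2 / 4) * (n : ℝ) = -(Δ ^ 2 / 4 * (n : ℝ)) := by ring
      calc expErr P A n - optErr P H
          ≤ (optErr P H + ∑ h ∈ hfinB.toFinset, ((sampleMeasure P n) (E h)).toReal)
            - optErr P H := by rw [← hstep2]; linarith
        _ = ∑ h ∈ hfinB.toFinset, ((sampleMeasure P n) (E h)).toReal := by ring
        _ ≤ (hfinB.toFinset.card : ℝ) * Real.exp (-(Δ ^ 2 / 4) * (n : ℝ)) := hsumbound
        _ ≤ ((hfinB.toFinset.card : ℝ) + 1) * Real.exp (-(Δ ^ 2 / 4 * (n : ℝ))) := by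
            rw [heq]
            have hx : (0:ℝ) < Real.exp (-(Δ ^ 2 / 4 * (n : ℝ))) := Real.exp_pos _
            have hcard : (0:ℝ) ≤ (hfinB.toFinset.card : ℝ) := Nat.cast_nonneg _
            nlinarith
    · -- non-integrable case
      rw [expErr, integral_undef hint]
      have : ((hfinB.toFinset.card : ℝ) + 1) * Real.exp (-(Δ ^ 2 / 4 * (n : ℝ))) > 0 := by
        positivity
      linarith
  · -- B empty: every hypothesis is optimal
    refine ⟨1, one_pos, 1, one_pos, fun n => ?_⟩
    have hconst : ∀ S : Fin n → X × Bool, er P (A n S) = optErr P H := by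
      intro S
      refine le_antisymm ?_ (hopt_le _ (hmem n S))
      by_contra hcon
      exact hB ⟨A n S, hmem n S, lt_of_not_ge hcon⟩
    have : expErr P A n = optErr P H := by
      rw [expErr]
      have heq : (fun S : Fin n → X × Bool => er P (A n S)) = fun _ => optErr P H :=
        funext hconst
      rw [heq, integral_const]
      simp [measure_univ]
    rw [this]
    have := Real.exp_pos (-(1 * (n : ℝ)))
    linarith

end ERMMain

section ERMAlgSec

variable {X : Type*} [MeasurableSpace X]

/-- Candidate minimizer indices. -/
noncomputable def ermSet {m : ℕ} (u : Fin m → X → Bool) {n : ℕ} (S : Fin n → X × Bool) :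
    Finset (Fin m) :=
  Finset.univ.filter fun k => ∀ j, empErr S (u k) ≤ empErr S (u j)

lemma ermSet_nonempty {m : ℕ} (hm : 0 < m) (u : Fin m → X → Bool) {n : ℕ}
    (S : Fin n → X × Bool) : (ermSet u S).Nonempty := by
  haveI : Nonempty (Fin m) := ⟨⟨0, hm⟩⟩
  obtain ⟨k, -, hk⟩ := Finset.exists_min_image (Finset.univ : Finset (Fin m))
    (fun k => empErr S (u k)) Finset.univ_nonempty
  refine ⟨k, ?_⟩
  simp only [ermSet, Finset.mem_filter, Finset.mem_univ, true_and]
  exact fun j => hk j (Finset.mem_univ j)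

/-- Least empirical-risk-minimizing index. -/
noncomputable def ermIdx {m : ℕ} (hm : 0 < m) (u : Fin m → X → Bool) {n : ℕ}
    (S : Fin n → X × Bool) : Fin m :=
  (ermSet u S).min' (ermSet_nonempty hm u S)

/-- The ERM algorithm over the finite family `u`. -/
noncomputable def ermAlg {m : ℕ} (hm : 0 < m) (u : Fin m → X → Bool) : Alg X :=
  fun _ S x => u (ermIdx hm u S) x

lemma ermAlg_eq {m : ℕ} (hm : 0 < m) (u : Fin m → X → Bool) (n : ℕ)
    (S : Fin n → X × Bool) : ermAlg hm u n S = u (ermIdx hm u S) := rfl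

lemma ermAlg_isERM {m : ℕ} (hm : 0 < m) (u : Fin m → X → Bool) (n : ℕ)
    (S : Fin n → X × Bool) (j : Fin m) :
    empErr S (ermAlg hm u n S) ≤ empErr S (u j) := by
  have hmem := (ermSet u S).min'_mem (ermSet_nonempty hm u S)
  simp only [ermSet, Finset.mem_filter, Finset.mem_univ, true_and] at hmem
  rw [ermAlg_eq]
  exact hmem j

lemma measurableSet_mem_ermSet {m : ℕ} {u : Fin m → X → Bool}
    (hu : ∀ k, Measurable (u k)) (n : ℕ) (j : Fin m) :
    MeasurableSet {S : Fin n → X × Bool | j ∈ ermSet u S} := by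
  have heq : {S : Fin n → X × Bool | j ∈ ermSet u S}
      = ⋂ i : Fin m, {S : Fin n → X × Bool | empErr S (u j) ≤ empErr S (u i)} := by
    ext S
    simp [ermSet, Set.mem_iInter]
  rw [heq]
  exact MeasurableSet.iInter fun i =>
    measurableSet_le (measurable_empErr (hu j)) (measurable_empErr (hu i))

lemma measurable_ermIdx {m : ℕ} (hm : 0 < m) {u : Fin m → X → Bool}
    (hu : ∀ k, Measurable (u k)) (n : ℕ) :
    Measurable fun S : Fin n → X × Bool => ermIdx hm u S := by
  refine measurable_to_countable' fun k => ?_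
  have hiff : ∀ S : Fin n → X × Bool,
      ermIdx hm u S = k ↔ (k ∈ ermSet u S ∧ ∀ j : Fin m, j ∈ ermSet u S → k ≤ j) := by
    intro S
    constructor
    · rintro rfl
      exact ⟨Finset.min'_mem _ _, fun j hj => Finset.min'_le _ _ hj⟩
    · rintro ⟨hk, hle⟩
      exact le_antisymm (Finset.min'_le _ _ hk) (hle _ (Finset.min'_mem _ _))
  have heq : {S : Fin n → X × Bool | ermIdx hm u S = k}
      = {S : Fin n → X × Bool | k ∈ ermSet u S}
        ∩ ⋂ j : Fin m, {S : Fin n → X × Bool | j ∈ ermSet u S → k ≤ j} := by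
    ext S
    simp only [Set.mem_setOf_eq, Set.mem_inter_iff, Set.mem_iInter, hiff S]
  rw [show (fun S : Fin n → X × Bool => ermIdx hm u S) ⁻¹' {k}
      = {S : Fin n → X × Bool | ermIdx hm u S = k} from rfl, heq]
  refine (measurableSet_mem_ermSet hu n k).inter (MeasurableSet.iInter fun j => ?_)
  by_cases hkj : k ≤ j
  · have : {S : Fin n → X × Bool | j ∈ ermSet u S → k ≤ j} = Set.univ := by
      ext S; simp [hkj]
    rw [this]; exact MeasurableSet.univ
  · have : {S : Fin n → X × Bool | j ∈ ermSet u S → k ≤ j}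
        = {S : Fin n → X × Bool | j ∈ ermSet u S}ᶜ := by
      ext S; simp [hkj]
    rw [this]; exact (measurableSet_mem_ermSet hu n j).compl

lemma measurable_ermAlg_joint {m : ℕ} (hm : 0 < m) {u : Fin m → X → Bool}
    (hu : ∀ k, Measurable (u k)) (n : ℕ) :
    Measurable fun p : (Fin n → X × Bool) × X => ermAlg hm u n p.1 p.2 := by
  have hG : Measurable fun q : X × Fin m => u q.2 q.1 :=
    measurable_from_prod_countable_left fun k => hu k
  exact hG.comp (measurable_snd.prodMk ((measurable_ermIdx hm hu n).comp measurable_fst))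

lemma measurable_ermAlg_pi {m : ℕ} (hm : 0 < m) {u : Fin m → X → Bool}
    (hu : ∀ k, Measurable (u k)) (n : ℕ) :
    Measurable (ermAlg hm u n) := by
  refine measurable_pi_lambda _ fun x => ?_
  exact (measurable_from_top (f := fun k : Fin m => u k x)).comp (measurable_ermIdx hm hu n)

end ERMAlgSec

/-- Theorem 4.1: any finite concept class is agnostically learnable at rate
`e^{-n}`, and this is achieved by any empirical risk minimization rule. -/
theorem finite_class_erm_exponential
    {X : Type*} [TopologicalSpace X] [PolishSpace X] [MeasurableSpace X] [BorelSpace X]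
    (H : Set (X → Bool)) (hne : H.Nonempty) (hfin : H.Finite)
    (hmeas : ∀ h ∈ H, Measurable h) :
    LearnableAtRate H (fun n => Real.exp (-(n : ℝ))) ∧
      ∀ A : Alg X, (∀ n : ℕ, Measurable (A n)) →
        (∀ (n : ℕ) (S : Fin n → X × Bool), A n S ∈ H) →
        (∀ (n : ℕ) (S : Fin n → X × Bool), ∀ h ∈ H, empErr S (A n S) ≤ empErr S h) →
        ∀ P : Measure (X × Bool), IsProbabilityMeasure P →
          ∃ C > (0 : ℝ), ∃ c > (0 : ℝ), ∀ n : ℕ,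
            expErr P A n - optErr P H ≤ C * Real.exp (-(c * (n : ℝ))) := by
  obtain ⟨h0, hh0⟩ := hne
  set L := hfin.toFinset.toList with hL
  have hmpos : 0 < L.length := by
    rw [Finset.length_toList]
    exact Finset.card_pos.mpr ⟨h0, hfin.mem_toFinset.mpr hh0⟩
  set u : Fin L.length → X → Bool := fun k => L.get k with hu
  have humem : ∀ k, u k ∈ H := by
    intro k
    have h1 : L.get k ∈ L := L.get_mem _
    rw [← hfin.mem_toFinset, ← Finset.mem_toList]
    exact h1
  have husurj : ∀ h ∈ H, ∃ k, u k = h := by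
    intro h hh
    have h1 : h ∈ L := by rw [hL, Finset.mem_toList, hfin.mem_toFinset]; exact hh
    obtain ⟨k, hk⟩ := List.get_of_mem h1
    exact ⟨k, hk⟩
  have humeas : ∀ k, Measurable (u k) := fun k => hmeas _ (humem k)
  constructor
  · refine ⟨ermAlg hmpos u,
      fun n μ _ => (measurable_ermAlg_joint hmpos humeas n).nullMeasurable, ?_⟩
    intro P hP
    obtain ⟨C, hC, c, hc, hbound⟩ := erm_excess_bound H ⟨h0, hh0⟩ hfin hmeas (ermAlg hmpos u)
      (fun n S => by rw [ermAlg_eq]; exact humem _)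
      (fun n S h hh => by obtain ⟨k, rfl⟩ := husurj h hh; exact ermAlg_isERM hmpos u n S k)
      P hP
    refine ⟨C * Real.exp 1, by positivity, c, hc, fun n => ?_⟩
    have h1 : excess P H (ermAlg hmpos u) n ≤ C * Real.exp (-(c * (n : ℝ))) := hbound n
    have h2 : (⌈c * (n : ℝ)⌉₊ : ℝ) ≤ c * (n : ℝ) + 1 :=
      (Nat.ceil_lt_add_one (mul_nonneg hc.le (Nat.cast_nonneg n))).le
    have h3 : Real.exp (-(c * (n : ℝ))) ≤ Real.exp 1 * Real.exp (-(⌈c * (n : ℝ)⌉₊ : ℝ)) := by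
      rw [← Real.exp_add]
      exact Real.exp_le_exp.mpr (by linarith)
    calc excess P H (ermAlg hmpos u) n ≤ C * Real.exp (-(c * (n : ℝ))) := h1
      _ ≤ C * (Real.exp 1 * Real.exp (-(⌈c * (n : ℝ)⌉₊ : ℝ))) :=
          mul_le_mul_of_nonneg_left h3 hC.le
      _ = C * Real.exp 1 * Real.exp (-(⌈c * (n : ℝ)⌉₊ : ℝ)) := by ring
  · intro A _ hAmem hAerm P hP
    exact erm_excess_bound H ⟨h0, hh0⟩ hfin hmeas A hAmem hAerm P hP


end Agn
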